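/- Every post-fixed point S of psim is contained in S⪯ = { (P,Q) | (∀ P', P →_L* P' ∧ P' irreducible → ∃ Q', Q →_R* Q' ∧ (P',Q') ∈ B) ∨ Q diverges }; consequently S⪯ is the greatest fixed point of psim. -/
import Mathlib


/-- A state is irreducible w.r.t. a transition relation if it has no successor. -/
def Irred {St : Type} (T : St → St → Prop) (P : St) : Prop := ∀ P', ¬ T P P'

/-- A state diverges if there is an infinite transition sequence starting from it. -/
def Diverges {St : Type} (T : St → St → Prop) (Q : St) : Prop :=
  ∃ g : ℕ → St, g 0 = Q ∧ ∀ n, T (g n) (g (n + 1))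

/-- The `psim` operator on relations between left and right states. -/
def psim {StL StR : Type} (L : StL → StL → Prop) (R : StR → StR → Prop)
    (B : StL → StR → Prop) (S : StL → StR → Prop) : StL → StR → Prop :=
  fun P Q =>
    ((Irred L P → ∃ Q', Relation.ReflTransGen R Q Q' ∧ B P Q') ∧
     (¬ Irred L P → ∀ P', L P P' → ∃ Q', Relation.ReflTransGen R Q Q' ∧ S P' Q')) ∨
    (∃ Q', R Q Q' ∧ S P Q')

/-- The partial-simulation relation. -/
def Spreq {StL StR : Type} (L : StL → StL → Prop) (R : StR → StR → Prop)
    (B : StL → StR → Prop) : StL → StR → Prop :=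
  fun P Q =>
    (∀ P', Relation.ReflTransGen L P P' ∧ Irred L P' →
      ∃ Q', Relation.ReflTransGen R Q Q' ∧ B P' Q') ∨
    Diverges R Q

lemma acc_of_not_diverges {St : Type} (R : St → St → Prop) (Q : St)
    (h : ¬ Diverges R Q) : Acc (fun a b => R b a) Q := by
  by_contra hA
  apply h
  have key : ∀ x, ¬ Acc (fun a b => R b a) x →
      ∃ y, R x y ∧ ¬ Acc (fun a b => R b a) y := by
    intro x hx
    by_contra hy
    push_neg at hy
    exact hx (Acc.intro x fun y hr => hy y hr)
  choose f hf1 hf2 using key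
  let T := {x : St // ¬ Acc (fun a b => R b a) x}
  let step : T → T := fun x => ⟨f x.1 x.2, hf2 x.1 x.2⟩
  let g : ℕ → T := fun n => step^[n] ⟨Q, hA⟩
  refine ⟨fun n => (g n).1, rfl, fun n => ?_⟩
  have hg : g (n + 1) = step (g n) := Function.iterate_succ_apply' step n _
  show R (g n).1 (g (n + 1)).1
  rw [hg]
  exact hf1 _ _

lemma acc_rtg {St : Type} (R : St → St → Prop) {Q Q' : St}
    (h : Relation.ReflTransGen R Q Q') (hA : Acc (fun a b => R b a) Q) :
    Acc (fun a b => R b a) Q' := by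
  induction h with
  | refl => exact hA
  | tail _ hstep ih => exact ih.inv hstep

lemma key_lemma {StL StR : Type} (L : StL → StL → Prop) (R : StR → StR → Prop)
    (B : StL → StR → Prop) (S : StL → StR → Prop)
    (hS : ∀ P Q, S P Q → psim L R B S P Q) :
    ∀ P P', Relation.ReflTransGen L P P' → Irred L P' →
      ∀ Q, Acc (fun a b => R b a) Q → S P Q →
        ∃ Q', Relation.ReflTransGen R Q Q' ∧ B P' Q' := by
  intro P P' hPP'
  induction hPP' using Relation.ReflTransGen.head_induction_on with
  | refl =>
    intro hIrr Q hAcc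
    induction hAcc with
    | intro Q hQ IH =>
      intro hSPQ
      rcases hS _ _ hSPQ with ⟨h1, _⟩ | ⟨Q₁, hstep, hS1⟩
      · exact h1 hIrr
      · obtain ⟨Q', hQ', hB⟩ := IH Q₁ hstep hS1
        exact ⟨Q', Relation.ReflTransGen.head hstep hQ', hB⟩
  | head hstep htail IHouter =>
    intro hIrr Q hAcc
    induction hAcc with
    | intro Q hQ IH2 =>
      intro hSPQ
      rcases hS _ _ hSPQ with ⟨_, h2⟩ | ⟨Q₁, hstep', hS1⟩
      · have hnI : ¬ Irred L _ := fun h => h _ hstep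
        obtain ⟨Q₁, hQQ₁, hS1⟩ := h2 hnI _ hstep
        obtain ⟨Q', hQ', hB⟩ :=
          IHouter hIrr Q₁ (acc_rtg R hQQ₁ (Acc.intro Q hQ)) hS1
        exact ⟨Q', hQQ₁.trans hQ', hB⟩
      · obtain ⟨Q', hQ', hB⟩ := IH2 Q₁ hstep' hS1
        exact ⟨Q', Relation.ReflTransGen.head hstep' hQ', hB⟩

lemma post_fixed_sub_Spreq {StL StR : Type} (L : StL → StL → Prop)
    (R : StR → StR → Prop) (B : StL → StR → Prop) (S : StL → StR → Prop)
    (hS : ∀ P Q, S P Q → psim L R B S P Q) :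
    ∀ P Q, S P Q → Spreq L R B P Q := by
  intro P Q hPQ
  by_cases hd : Diverges R Q
  · exact Or.inr hd
  · refine Or.inl fun P' ⟨hrt, hirr⟩ => ?_
    exact key_lemma L R B S hS P P' hrt hirr Q (acc_of_not_diverges R Q hd) hPQ

lemma psim_mono {StL StR : Type} (L : StL → StL → Prop) (R : StR → StR → Prop)
    (B : StL → StR → Prop) (S S' : StL → StR → Prop)
    (h : ∀ P Q, S P Q → S' P Q) :
    ∀ P Q, psim L R B S P Q → psim L R B S' P Q := by
  intro P Q hPQ
  rcases hPQ with ⟨h1, h2⟩ | ⟨Q', hstep, hS⟩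
  · refine Or.inl ⟨h1, fun hnI P' hL => ?_⟩
    obtain ⟨Q', hQ', hS⟩ := h2 hnI P' hL
    exact ⟨Q', hQ', h P' Q' hS⟩
  · exact Or.inr ⟨Q', hstep, h P Q' hS⟩

lemma Spreq_sub_psim {StL StR : Type} (L : StL → StL → Prop)
    (R : StR → StR → Prop) (B : StL → StR → Prop) :
    ∀ P Q, Spreq L R B P Q → psim L R B (Spreq L R B) P Q := by
  intro P Q hPQ
  rcases hPQ with h | ⟨g, hg0, hgstep⟩
  · refine Or.inl ⟨fun hIrr => h P ⟨Relation.ReflTransGen.refl, hIrr⟩,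
      fun _ P' hL => ⟨Q, Relation.ReflTransGen.refl, Or.inl fun P'' ⟨hrt, hirr⟩ =>
        h P'' ⟨Relation.ReflTransGen.head hL hrt, hirr⟩⟩⟩
  · refine Or.inr ⟨g 1, hg0 ▸ hgstep 0, Or.inr ⟨fun n => g (n + 1), rfl,
      fun n => hgstep (n + 1)⟩⟩

theorem Spreq_gfp {StL StR : Type} (L : StL → StL → Prop) (R : StR → StR → Prop)
    (B : StL → StR → Prop) :
    (∀ S : StL → StR → Prop, (∀ P Q, S P Q → psim L R B S P Q) →
      ∀ P Q, S P Q → Spreq L R B P Q) ∧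
    (∀ P Q, psim L R B (Spreq L R B) P Q ↔ Spreq L R B P Q) := by
  constructor
  · exact fun S hS => post_fixed_sub_Spreq L R B S hS
  · intro P Q
    constructor
    · intro h
      refine post_fixed_sub_Spreq L R B (psim L R B (Spreq L R B)) ?_ P Q h
      exact fun P Q h => psim_mono L R B _ _ (Spreq_sub_psim L R B) P Q h
    · exact Spreq_sub_psim L R B P Q
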